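/- Let e, m, n be positive integers with binomial(e+2, 2) = n + 1, let P^N be the projective space of degree-m hypersurfaces in Pⁿ, let X ⊂ P^N × Pⁿ be the universal hypersurface of degree m, and let P² → P^N be a general map given by the degree-e Veronese map P² → P^{binomial(e+2,2)−1} followed by a general linear inclusion into P^N. Let π : X = P² ×_{P^N} 𝒳 → P² be the pullback of the universal hypersurface. Then the restriction of the family π : X → P² to any curve C ⊂ P² of degree e or less has a section. -/

import Mathlib

/- A classical (point-set) framework for the universal hypersurface pulled back to `ℙ²`
by a Veronese embedding followed by a linear inclusion. -/

open scoped LinearAlgebra.Projectivization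

noncomputable section

/-- The nonzero representatives of a point of projective space. -/
def reps {V : Type*} [AddCommGroup V] [Module ℂ V] (x : ℙ ℂ V) : Set V :=
  {v | ∃ h : v ≠ 0, Projectivization.mk ℂ v h = x}

/-- A polynomial function on a complex vector space: an element of the subalgebra of
functions generated by the linear functionals. -/
def IsPolyFun {V : Type*} [AddCommGroup V] [Module ℂ V] (f : V → ℂ) : Prop :=
  f ∈ Algebra.adjoin ℂ {g : V → ℂ | IsLinearMap ℂ g}

/-- Degree-`e` homogeneous polynomials in three variables. -/
abbrev HPoly3 (e : ℕ) : Type := MvPolynomial.homogeneousSubmodule (Fin 3) ℂ e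

/-- Degree-`m` homogeneous polynomials in `n+1` variables. -/
abbrev HPolyN (n m : ℕ) : Type := MvPolynomial.homogeneousSubmodule (Fin (n+1)) ℂ m

/-- Evaluation at `v` as a linear functional on degree-`e` forms; `v ↦ [ev_v]` is the
degree-`e` Veronese embedding of `ℙ²` in the projective space of the dual of `HPoly3 e`. -/
def veroneseEval (e : ℕ) (v : Fin 3 → ℂ) : Module.Dual ℂ (HPoly3 e) :=
  (MvPolynomial.aeval v).toLinearMap.comp (MvPolynomial.homogeneousSubmodule (Fin 3) ℂ e).subtype

abbrev P2 : Type := ℙ ℂ (Fin 3 → ℂ)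
abbrev Pn (n : ℕ) : Type := ℙ ℂ (Fin (n+1) → ℂ)

/-- The total space of the pullback along (Veronese ∘ linear inclusion `ℓ`) of the universal
degree-`m` hypersurface in `ℙⁿ`: the pairs `(u, x) ∈ ℙ² × ℙⁿ` with
`F(ℓ(ev_u))(x) = 0`. -/
def PulledBackFamily (e n m : ℕ) (ℓ : Module.Dual ℂ (HPoly3 e) →ₗ[ℂ] HPolyN n m) :
    Set (P2 × Pn n) :=
  {ux | ∀ v ∈ reps ux.1, ∀ w ∈ reps ux.2,
    MvPolynomial.eval w ((ℓ (veroneseEval e v) : HPolyN n m) : MvPolynomial (Fin (n+1)) ℂ) = 0}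

/-- The plane curve defined by a nonzero form `g`. -/
def PlaneCurve {k : ℕ} (g : HPoly3 k) : Set P2 :=
  {u | ∀ v ∈ reps u, MvPolynomial.eval v (g : MvPolynomial (Fin 3) ℂ) = 0}

/-- Zariski-closed subsets of `ℙ² × ℙⁿ`. -/
def ClosedP2Pn (n : ℕ) (S : Set (P2 × Pn n)) : Prop :=
  ∃ F : Set (((Fin 3 → ℂ) × (Fin (n+1) → ℂ)) → ℂ), (∀ f ∈ F, IsPolyFun f) ∧
    S = {ux | ∀ f ∈ F, ∀ v ∈ reps ux.1, ∀ w ∈ reps ux.2, f (v, w) = 0}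

/-- The restriction of the family to the curve `C` admits a (regular, single-valued)
section: a Zariski-closed subset of `ℙ² × ℙⁿ` contained in the family over `C` which is the
graph of a function on `C`. -/
def SectionOverCurve (e n m : ℕ) (ℓ : Module.Dual ℂ (HPoly3 e) →ₗ[ℂ] HPolyN n m)
    (C : Set P2) : Prop :=
  ∃ S : Set (P2 × Pn n), ClosedP2Pn n S ∧
    (∀ ux ∈ S, ux.1 ∈ C ∧ ux ∈ PulledBackFamily e n m ℓ) ∧
    ∀ u ∈ C, ∃! x : Pn n, (u, x) ∈ S

open MvPolynomial Module

namespace UHPAux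


lemma degree_univ {n : ℕ} (u : Fin n →₀ ℕ) : u.degree = ∑ j, u j := by
  rw [Finsupp.degree]
  exact Finset.sum_subset (Finset.subset_univ _)
    (fun i _ hn => Finsupp.notMem_support_iff.mp hn)

lemma degree_of_coeff_ne_zero {σ : Type*} {p : MvPolynomial σ ℂ} {d : ℕ}
    (hp : p.IsHomogeneous d) {u : σ →₀ ℕ} (h : coeff u p ≠ 0) : u.degree = d := by
  rw [Finsupp.degree_eq_weight_one]
  exact hp h

lemma degree_add {σ : Type*} (a b : σ →₀ ℕ) :
    (a + b).degree = a.degree + b.degree := by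
  rw [Finsupp.degree_eq_weight_one, map_add]

lemma homogComp_mul {σ : Type*} [DecidableEq σ] (p f : MvPolynomial σ ℂ) {m : ℕ}
    (hf : f.IsHomogeneous m) {d : ℕ} (hmd : m ≤ d) :
    homogeneousComponent d (p * f) = homogeneousComponent (d - m) p * f := by
  ext u
  rw [coeff_homogeneousComponent, coeff_mul, coeff_mul]
  by_cases hud : u.degree = d
  · rw [if_pos hud]
    refine Finset.sum_congr rfl ?_
    rintro ⟨a, b⟩ hab
    rw [Finset.HasAntidiagonal.mem_antidiagonal] at hab
    rw [coeff_homogeneousComponent]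
    by_cases hh : a.degree = d - m
    · rw [if_pos hh]
    · have hbf : coeff b f = 0 := by
        by_contra hbf
        have hb : b.degree = m := degree_of_coeff_ne_zero hf hbf
        have : a.degree + b.degree = u.degree := by rw [← hab, degree_add]
        omega
      rw [hbf, mul_zero, mul_zero]
  · rw [if_neg hud]
    refine (Finset.sum_eq_zero ?_).symm
    rintro ⟨a, b⟩ hab
    rw [Finset.HasAntidiagonal.mem_antidiagonal] at hab
    rw [coeff_homogeneousComponent]
    by_cases hh : a.degree = d - m
    · have hbf : coeff b f = 0 := by
        by_contra hbf
        have hb : b.degree = m := degree_of_coeff_ne_zero hf hbf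
        have : a.degree + b.degree = u.degree := by rw [← hab, degree_add]
        omega
      rw [hbf, mul_zero]
    · rw [if_neg hh, zero_mul]

lemma eval_smul_of_isHomogeneous {σ : Type*} {p : MvPolynomial σ ℂ} {d : ℕ}
    (hp : p.IsHomogeneous d) (t : ℂ) (w : σ → ℂ) :
    eval (t • w) p = t ^ d * eval w p := by
  conv_lhs => rw [← support_sum_monomial_coeff p]
  conv_rhs => rw [← support_sum_monomial_coeff p]
  rw [map_sum, map_sum, Finset.mul_sum]
  refine Finset.sum_congr rfl fun u hu => ?_
  have hdeg : u.degree = d :=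
    degree_of_coeff_ne_zero hp (mem_support_iff.mp hu)
  rw [eval_monomial, eval_monomial]
  have : (u.prod fun i e => (t • w) i ^ e) = t ^ d * u.prod fun i e => w i ^ e := by
    rw [Finsupp.prod, Finsupp.prod]
    have : ∀ i ∈ u.support, (t • w) i ^ u i = t ^ u i * w i ^ u i := by
      intro i _
      rw [Pi.smul_apply, smul_eq_mul, mul_pow]
    rw [Finset.prod_congr rfl this, Finset.prod_mul_distrib,
      Finset.prod_pow_eq_pow_sum, ← Finsupp.degree_apply, hdeg]
  rw [this]
  ring


/-- Auxiliary generating sets used in the proof of `exists_common_root`. -/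
def rootGens (m D : ℕ) {ι : Type} [Fintype ι] {σ : Type} (f : ι → MvPolynomial σ ℂ)
    (d : ℕ) : Set (MvPolynomial σ ℂ) :=
  {x | ∃ (c : ι → ℕ) (u : σ →₀ ℕ), u.degree < D ∧ m * (∑ i, c i) + u.degree = d ∧
    x = (∏ i, f i ^ c i) * monomial u 1}

/-- Auxiliary family of monomial exponents. -/
def rootRho (n s d : ℕ) (a : Fin n → Fin (s + 1)) : Fin (n + 1) →₀ ℕ :=
  Finsupp.equivFunOnFinite.symm (Fin.cons (d - ∑ i, (a i : ℕ)) (fun i => (a i : ℕ)))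

/-- Auxiliary spanning family. -/
def rootV (n m d D : ℕ) {ι : Type} [Fintype ι] (i₀ : ι) (f : ι → MvPolynomial (Fin (n + 1)) ℂ)
    (cu : ({i : ι // i ≠ i₀} → Fin (d + 1)) × (Fin (n + 1) → Fin D)) :
    MvPolynomial (Fin (n + 1)) ℂ :=
  letI := Classical.decEq ι
  (∏ i, f i ^ (if h : i = i₀ then
      ((d - (Finsupp.equivFunOnFinite.symm (fun j => ((cu.2 j : ℕ))) : Fin (n + 1) →₀ ℕ).degree) / m
        - ∑ i' : {i : ι // i ≠ i₀}, (cu.1 i' : ℕ))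
    else (cu.1 ⟨i, h⟩ : ℕ))) *
  monomial (Finsupp.equivFunOnFinite.symm (fun j => ((cu.2 j : ℕ)))) 1

/-- Over `ℂ`, a family of at most `n` homogeneous forms of positive degree in `n+1`
variables has a common nontrivial zero. -/
lemma exists_common_root {n m : ℕ} (hn : 0 < n) (hm : 0 < m) {ι : Type} [Fintype ι]
    (hcard : Fintype.card ι ≤ n) (f : ι → MvPolynomial (Fin (n + 1)) ℂ)
    (hf : ∀ i, (f i).IsHomogeneous m) :
    ∃ w : Fin (n + 1) → ℂ, w ≠ 0 ∧ ∀ i, eval w (f i) = 0 := by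
  classical
  by_contra hcon
  push_neg at hcon
  have hw1 : (Pi.single 0 1 : Fin (n + 1) → ℂ) ≠ 0 := by
    intro h
    have := congrFun h 0
    simp at this
  have hne : Nonempty ι := by
    rcases isEmpty_or_nonempty ι with h | h
    · obtain ⟨i, -⟩ := hcon _ hw1
      exact h.elim i
    · exact h
  obtain ⟨i₀⟩ := hne
  set I : Ideal (MvPolynomial (Fin (n + 1)) ℂ) := Ideal.span (Set.range f) with hI
  have hrad : ∀ j, (X j : MvPolynomial (Fin (n + 1)) ℂ) ∈ I.radical := by
    intro j
    rw [← vanishingIdeal_zeroLocus_eq_radical (K := ℂ)]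
    intro x hx
    have hx0 : x = 0 := by
      by_contra hx0
      obtain ⟨i, hi⟩ := hcon x hx0
      exact hi (hx (f i) (Ideal.subset_span (Set.mem_range_self i)))
    rw [hx0, aeval_X]
    rfl
  have hpow : ∀ j, ∃ N, (X j : MvPolynomial (Fin (n + 1)) ℂ) ^ N ∈ I := fun j => hrad j
  choose Nj hNj using hpow
  set N : ℕ := m + ∑ j, Nj j with hN
  have hmN : m ≤ N := Nat.le_add_right _ _
  have hXN : ∀ j, (X j : MvPolynomial (Fin (n + 1)) ℂ) ^ N ∈ I := by
    intro j
    have hle : Nj j ≤ N :=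
      le_trans (Finset.single_le_sum (fun _ _ => Nat.zero_le _) (Finset.mem_univ j))
        (Nat.le_add_left _ _)
    have : (X j : MvPolynomial (Fin (n + 1)) ℂ) ^ N
        = X j ^ (N - Nj j) * X j ^ Nj j := by
      rw [← pow_add, Nat.sub_add_cancel hle]
    rw [this]
    exact Ideal.mul_mem_left _ _ (hNj j)
  set D : ℕ := (n + 1) * N with hD
  have hND : N ≤ D := Nat.le_mul_of_pos_left N (by omega)
  have key : ∀ d, ∀ p : MvPolynomial (Fin (n + 1)) ℂ, p.IsHomogeneous d →
      p ∈ Submodule.span ℂ (rootGens m D f d) := by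
    intro d
    induction d using Nat.strong_induction_on with
    | _ d ih =>
    intro p hp
    rw [← support_sum_monomial_coeff p]
    refine Submodule.sum_mem _ fun u hu => ?_
    have hdeg : u.degree = d := degree_of_coeff_ne_zero hp (mem_support_iff.mp hu)
    have hmono : (monomial u (coeff u p) : MvPolynomial (Fin (n + 1)) ℂ)
        = coeff u p • monomial u 1 := by
      rw [smul_monomial, smul_eq_mul, mul_one]
    rw [hmono]
    refine Submodule.smul_mem _ _ ?_
    rcases lt_or_ge d D with hdD | hdD
    · exact Submodule.subset_span ⟨0, u, by omega, by simpa using hdeg, by simp⟩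
    · have hdm : m ≤ d := le_trans hmN (le_trans hND hdD)
      obtain ⟨j, hj⟩ : ∃ j, N ≤ u j := by
        by_contra hc
        push_neg at hc
        have h1 : u.degree ≤ (n + 1) * (N - 1) := by
          rw [degree_univ]
          calc ∑ j, u j ≤ ∑ _j : Fin (n + 1), (N - 1) :=
                Finset.sum_le_sum (fun j _ => by have := hc j; omega)
            _ = (n + 1) * (N - 1) := by
                rw [Finset.sum_const, Finset.card_univ, Fintype.card_fin, smul_eq_mul]
        have h2 : (n + 1) * (N - 1) < (n + 1) * N :=
          mul_lt_mul_of_pos_left (by omega) (by omega)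
        omega
      set u' := u - Finsupp.single j N with hu'
      have husum : Finsupp.single j N + u' = u := by
        ext i
        rw [Finsupp.add_apply, hu', Finsupp.tsub_apply]
        rcases eq_or_ne j i with hij | hij
        · subst hij
          rw [Finsupp.single_eq_same]
          omega
        · rw [Finsupp.single_eq_of_ne' hij]
          omega
      have hmonom : (monomial u 1 : MvPolynomial (Fin (n + 1)) ℂ)
          = X j ^ N * monomial u' 1 := by
        rw [X_pow_eq_monomial, monomial_mul, one_mul, husum]
      have hXmem := hXN j
      rw [hI, Ideal.span, Submodule.mem_span_range_iff_exists_fun] at hXmem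
      obtain ⟨c, hc⟩ := hXmem
      have hrepr : (monomial u 1 : MvPolynomial (Fin (n + 1)) ℂ)
          = ∑ i, (c i * monomial u' 1) * f i := by
        rw [hmonom, ← hc, Finset.sum_mul]
        refine Finset.sum_congr rfl fun i _ => ?_
        rw [smul_eq_mul]
        ring
      have h1 : homogeneousComponent d (monomial u 1 : MvPolynomial (Fin (n + 1)) ℂ)
          = monomial u 1 := by
        rw [homogeneousComponent_of_mem
          ((mem_homogeneousSubmodule _ _).mpr (isHomogeneous_monomial 1 hdeg)),
          if_pos rfl]
      have hcomp : (monomial u 1 : MvPolynomial (Fin (n + 1)) ℂ)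
          = ∑ i, homogeneousComponent (d - m) (c i * monomial u' 1) * f i := by
        calc (monomial u 1 : MvPolynomial (Fin (n + 1)) ℂ)
            = homogeneousComponent d (monomial u 1) := h1.symm
          _ = homogeneousComponent d (∑ i, (c i * monomial u' 1) * f i) := by rw [← hrepr]
          _ = ∑ i, homogeneousComponent d ((c i * monomial u' 1) * f i) := map_sum _ _ _
          _ = ∑ i, homogeneousComponent (d - m) (c i * monomial u' 1) * f i :=
              Finset.sum_congr rfl fun i _ => homogComp_mul _ _ (hf i) hdm
      rw [hcomp]
      refine Submodule.sum_mem _ fun i _ => ?_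
      have hhom := homogeneousComponent_isHomogeneous (d - m) (c i * monomial u' 1)
      have hih := ih (d - m) (by omega) _ hhom
      have hmap : (Submodule.span ℂ (rootGens m D f (d - m))).map
          (LinearMap.mulRight ℂ (f i)) ≤ Submodule.span ℂ (rootGens m D f d) := by
        rw [Submodule.map_span]
        refine Submodule.span_le.mpr ?_
        rintro _ ⟨x, ⟨cc, uu, huu, hsumc, rfl⟩, rfl⟩
        refine Submodule.subset_span ⟨Function.update cc i (cc i + 1), uu, huu, ?_, ?_⟩
        · have hupd : ∑ i', Function.update cc i (cc i + 1) i' = (∑ i', cc i') + 1 := by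
            rw [Finset.sum_update_of_mem (Finset.mem_univ i),
              Finset.sum_eq_sum_sdiff_singleton_add (Finset.mem_univ i) cc]
            omega
          rw [hupd]
          calc m * ((∑ i', cc i') + 1) + uu.degree
              = (m * (∑ i', cc i') + uu.degree) + m := by ring
            _ = (d - m) + m := by rw [hsumc]
            _ = d := Nat.sub_add_cancel hdm
        · rw [LinearMap.mulRight_apply]
          have hprod : ∏ i', f i' ^ Function.update cc i (cc i + 1) i'
              = (∏ i', f i' ^ cc i') * f i := by
            rw [← Finset.mul_prod_erase Finset.univ
                (fun i' => f i' ^ Function.update cc i (cc i + 1) i') (Finset.mem_univ i),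
              ← Finset.mul_prod_erase Finset.univ
                (fun i' => f i' ^ cc i') (Finset.mem_univ i)]
            have herase : ∏ i' ∈ Finset.univ.erase i, f i' ^ Function.update cc i (cc i + 1) i'
                = ∏ i' ∈ Finset.univ.erase i, f i' ^ cc i' :=
              Finset.prod_congr rfl fun x hx => by
                rw [Function.update_of_ne (Finset.mem_erase.mp hx).1]
            rw [herase, Function.update_self, pow_succ]
            ring
          rw [hprod]
          ring
      exact hmap ⟨_, hih, rfl⟩
  -- counting
  set r := Fintype.card ι with hr
  have hr1 : 1 ≤ r := Fintype.card_pos_iff.mpr ⟨i₀⟩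
  have hD1 : 1 ≤ D := le_trans (le_trans hm hmN) hND
  set B : ℕ := D ^ (n + 1) with hB
  have hB1 : 1 ≤ B := Nat.one_le_pow _ _ (by omega)
  set s : ℕ := B * (n + 1) ^ (n - 1) with hs
  have hs1 : 1 ≤ s := Nat.one_le_iff_ne_zero.mpr (by positivity)
  set d := n * s with hd
  have hsum_le : ∀ a : Fin n → Fin (s + 1), ∑ i, (a i : ℕ) ≤ d := by
    intro a
    calc ∑ i, (a i : ℕ) ≤ ∑ _i : Fin n, s :=
          Finset.sum_le_sum (fun i _ => Nat.lt_succ_iff.mp (a i).isLt)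
      _ = n * s := by rw [Finset.sum_const, Finset.card_univ, Fintype.card_fin, smul_eq_mul]
  have hρcoe : ∀ (a : Fin n → Fin (s + 1)) j,
      rootRho n s d a j
        = (Fin.cons (d - ∑ i, (a i : ℕ)) (fun i => (a i : ℕ)) : Fin (n + 1) → ℕ) j :=
    fun a j => rfl
  have hρdeg : ∀ a, (rootRho n s d a).degree = d := by
    intro a
    rw [degree_univ, Fin.sum_univ_succ]
    simp only [hρcoe, Fin.cons_zero, Fin.cons_succ]
    have := hsum_le a
    omega
  have hρinj : Function.Injective (rootRho n s d) := by
    intro a b hab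
    funext i
    have h3 : rootRho n s d a i.succ = rootRho n s d b i.succ := by rw [hab]
    rw [hρcoe, hρcoe, Fin.cons_succ, Fin.cons_succ] at h3
    exact Fin.val_injective h3
  have hgens_sub : rootGens m D f d ⊆ Set.range (rootV n m d D i₀ f) := by
    rintro x ⟨c, u, huD, hsumc, rfl⟩
    have hcsum_le : ∑ i, c i ≤ d := by
      have h1 : ∑ i, c i ≤ m * ∑ i, c i := Nat.le_mul_of_pos_left _ hm
      omega
    have hci : ∀ i, c i ≤ d := fun i =>
      le_trans (Finset.single_le_sum (f := c) (fun _ _ => Nat.zero_le _)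
        (Finset.mem_univ i)) hcsum_le
    refine ⟨(fun i' => ⟨c i'.1, Nat.lt_succ_of_le (hci _)⟩,
      fun j => ⟨u j, lt_of_le_of_lt (Finsupp.le_degree j u) huD⟩), ?_⟩
    rw [rootV]
    simp only [Fin.val_mk]
    have huu : (Finsupp.equivFunOnFinite.symm (fun j => u j) : Fin (n + 1) →₀ ℕ) = u := by
      ext j
      rfl
    rw [huu]
    congr 1
    refine Finset.prod_congr rfl fun i _ => ?_
    congr 1
    by_cases h : i = i₀
    · subst h
      rw [dif_pos rfl]
      have htt : (d - u.degree) / m = ∑ i', c i' := by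
        have h1 : d - u.degree = m * ∑ i', c i' := by omega
        rw [h1, Nat.mul_div_cancel_left _ hm]
      have hsplit : ∑ i', c i' = c i + ∑ i' : {x : ι // x ≠ i}, c i'.1 := by
        have h1 : ∑ i' : {x : ι // x ≠ i}, c i'.1 = ∑ i'' ∈ Finset.univ.erase i, c i'' := by
          refine (Finset.sum_subtype _ (fun x => ?_) c).symm
          simp [Finset.mem_erase]
        rw [h1, ← Finset.add_sum_erase _ c (Finset.mem_univ i)]
      rw [htt]
      omega
    · rw [dif_neg h]
  have hmem : ∀ a : Fin n → Fin (s + 1),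
      (monomial (rootRho n s d a) 1 : MvPolynomial (Fin (n + 1)) ℂ)
        ∈ Submodule.span ℂ (Set.range (rootV n m d D i₀ f)) := by
    intro a
    have h1 : (monomial (rootRho n s d a) 1 : MvPolynomial (Fin (n + 1)) ℂ).IsHomogeneous d :=
      isHomogeneous_monomial 1 (hρdeg a)
    exact Submodule.span_mono hgens_sub (key d _ h1)
  set W := Submodule.span ℂ (Set.range (rootV n m d D i₀ f)) with hW
  haveI : FiniteDimensional ℂ W :=
    FiniteDimensional.span_of_finite ℂ (Set.finite_range (rootV n m d D i₀ f))
  have hli : LinearIndependent ℂ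
      (fun a : Fin n → Fin (s + 1) => (⟨monomial (rootRho n s d a) 1, hmem a⟩ : W)) := by
    have h2 : LinearIndependent ℂ
        (fun a : Fin n → Fin (s + 1) =>
          (monomial (rootRho n s d a) 1 : MvPolynomial (Fin (n + 1)) ℂ)) := by
      have h3 := (basisMonomials (Fin (n + 1)) ℂ).linearIndependent.comp _ hρinj
      have h4 : (⇑(basisMonomials (Fin (n + 1)) ℂ) ∘ rootRho n s d)
          = fun a => (monomial (rootRho n s d a) 1 : MvPolynomial (Fin (n + 1)) ℂ) := by
        funext a
        simp [Function.comp, coe_basisMonomials]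
      rwa [h4] at h3
    exact h2.of_comp W.subtype
  have hcard1 : Fintype.card (Fin n → Fin (s + 1)) ≤ finrank ℂ W :=
    hli.fintype_card_le_finrank
  have hcard2 : finrank ℂ W ≤
      Fintype.card (({i : ι // i ≠ i₀} → Fin (d + 1)) × (Fin (n + 1) → Fin D)) :=
    finrank_range_le_card (rootV n m d D i₀ f)
  have hc1 : Fintype.card (Fin n → Fin (s + 1)) = (s + 1) ^ n := by
    rw [Fintype.card_fun, Fintype.card_fin, Fintype.card_fin]
  have hcι' : Fintype.card {i : ι // i ≠ i₀} = r - 1 := by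
    have h5 : Fintype.card {i : ι // i ≠ i₀}
        = Fintype.card ι - Fintype.card {i : ι // i = i₀} :=
      Fintype.card_subtype_compl _
    rw [h5, Fintype.card_subtype_eq]
  have hc2 : Fintype.card (({i : ι // i ≠ i₀} → Fin (d + 1)) × (Fin (n + 1) → Fin D))
      = (d + 1) ^ (r - 1) * D ^ (n + 1) := by
    rw [Fintype.card_prod, Fintype.card_fun, Fintype.card_fun, hcι',
      Fintype.card_fin, Fintype.card_fin, Fintype.card_fin]
  have hfinal : (s + 1) ^ n ≤ (d + 1) ^ (r - 1) * D ^ (n + 1) := by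
    rw [← hc1, ← hc2]
    exact le_trans hcard1 hcard2
  have h3 : (d + 1) ^ (r - 1) ≤ (d + 1) ^ (n - 1) :=
    Nat.pow_le_pow_right (by omega) (by omega)
  have h4 : d + 1 ≤ (n + 1) * (s + 1) := by
    calc d + 1 = n * s + 1 := by rw [hd]
      _ ≤ n * s + n + s + 1 := by omega
      _ = (n + 1) * (s + 1) := by ring
  have h5 : (d + 1) ^ (n - 1) ≤ (n + 1) ^ (n - 1) * (s + 1) ^ (n - 1) := by
    calc (d + 1) ^ (n - 1) ≤ ((n + 1) * (s + 1)) ^ (n - 1) := Nat.pow_le_pow_left h4 _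
      _ = (n + 1) ^ (n - 1) * (s + 1) ^ (n - 1) := mul_pow _ _ _
  have h6 : (s + 1) ^ n ≤ s * (s + 1) ^ (n - 1) := by
    calc (s + 1) ^ n ≤ (d + 1) ^ (r - 1) * D ^ (n + 1) := hfinal
      _ ≤ (d + 1) ^ (n - 1) * B := Nat.mul_le_mul h3 le_rfl
      _ ≤ ((n + 1) ^ (n - 1) * (s + 1) ^ (n - 1)) * B := Nat.mul_le_mul h5 le_rfl
      _ = (B * (n + 1) ^ (n - 1)) * (s + 1) ^ (n - 1) := by ring
      _ = s * (s + 1) ^ (n - 1) := by rw [← hs]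
  have h7 : (s + 1) ^ n = (s + 1) * (s + 1) ^ (n - 1) := by
    conv_lhs => rw [show n = (n - 1) + 1 by omega]
    rw [pow_succ]
    ring
  have h8 : s + 1 ≤ s := by
    have hpos : 0 < (s + 1) ^ (n - 1) := pow_pos (by omega) _
    rw [h7] at h6
    exact Nat.le_of_mul_le_mul_right h6 hpos
  omega


lemma degree_toFinsupp {σ : Type*} [DecidableEq σ] (s : Multiset σ) :
    (Multiset.toFinsupp s).degree = Multiset.card s := by
  have h1 : (Multiset.toFinsupp s).degree = (Multiset.toFinsupp s).sum (fun _ => id) := rfl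
  rw [h1, Multiset.toFinsupp_sum_eq]

/-- The monomial family in the homogeneous submodule, indexed by `Sym`. -/
def symMonomial (σ : Type*) [Fintype σ] [DecidableEq σ] (d : ℕ) (s : Sym σ d) :
    homogeneousSubmodule σ ℂ d :=
  ⟨monomial (Multiset.toFinsupp (s : Multiset σ)) 1,
    (mem_homogeneousSubmodule _ _).mpr (isHomogeneous_monomial 1 (by
      rw [degree_toFinsupp]
      exact s.2))⟩

lemma symMonomial_spans (σ : Type*) [Fintype σ] [DecidableEq σ] (d : ℕ)
    (P : homogeneousSubmodule σ ℂ d) :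
    P ∈ Submodule.span ℂ (Set.range (symMonomial σ d)) := by
  have hp : (P : MvPolynomial σ ℂ).IsHomogeneous d := (mem_homogeneousSubmodule _ _).mp P.2
  have hcard : ∀ u ∈ (P : MvPolynomial σ ℂ).support,
      Multiset.card (Finsupp.toMultiset u) = d := by
    intro u hu
    rw [Finsupp.card_toMultiset]
    show u.degree = d
    exact degree_of_coeff_ne_zero hp (mem_support_iff.mp hu)
  have hrep : P = ∑ u ∈ (P : MvPolynomial σ ℂ).support.attach,
      coeff u.1 (P : MvPolynomial σ ℂ) •
        symMonomial σ d ⟨Finsupp.toMultiset u.1, hcard u.1 u.2⟩ := by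
    apply Subtype.ext
    simp only [AddSubmonoidClass.coe_finset_sum, SetLike.val_smul, symMonomial]
    show (P : MvPolynomial σ ℂ) = ∑ x ∈ (P : MvPolynomial σ ℂ).support.attach,
      coeff x.1 (P : MvPolynomial σ ℂ) • monomial (Multiset.toFinsupp (Finsupp.toMultiset x.1)) 1
    rw [Finset.sum_attach ((P : MvPolynomial σ ℂ).support)
      (fun u => coeff u (P : MvPolynomial σ ℂ) •
        (monomial (Multiset.toFinsupp (Finsupp.toMultiset u)) (1 : ℂ)))]
    conv_lhs => rw [← support_sum_monomial_coeff (P : MvPolynomial σ ℂ)]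
    refine Finset.sum_congr rfl fun u _ => ?_
    rw [Finsupp.toMultiset_toFinsupp, smul_monomial, smul_eq_mul, mul_one]
  rw [hrep]
  exact Submodule.sum_mem _ fun u _ => Submodule.smul_mem _ _
    (Submodule.subset_span (Set.mem_range_self _))

lemma span_symMonomial_eq_top (σ : Type*) [Fintype σ] [DecidableEq σ] (d : ℕ) :
    Submodule.span ℂ (Set.range (symMonomial σ d)) = ⊤ :=
  eq_top_iff.mpr fun P _ => symMonomial_spans σ d P

instance homogeneousSubmodule_finiteDimensional (σ : Type*) [Fintype σ] (d : ℕ) :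
    FiniteDimensional ℂ (homogeneousSubmodule σ ℂ d) := by
  classical
  exact ⟨⟨Finset.univ.image (symMonomial σ d), by
    rw [Finset.coe_image, Finset.coe_univ, Set.image_univ]
    exact span_symMonomial_eq_top σ d⟩⟩

lemma finrank_homogeneousSubmodule_le (σ : Type*) [Fintype σ] [DecidableEq σ] (d : ℕ) :
    finrank ℂ (homogeneousSubmodule σ ℂ d) ≤ Fintype.card (Sym σ d) := by
  rw [← finrank_top ℂ, ← span_symMonomial_eq_top σ d]
  exact finrank_range_le_card _

lemma finrank_HPoly3_le (e : ℕ) :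
    finrank ℂ (homogeneousSubmodule (Fin 3) ℂ e) ≤ (e + 2).choose 2 := by
  have h1 := finrank_homogeneousSubmodule_le (Fin 3) e
  have h2 : Fintype.card (Sym (Fin 3) e) = (e + 2).choose 2 := by
    rw [Sym.card_sym_eq_multichoose, Fintype.card_fin, Nat.multichoose_eq]
    have h3 : 3 + e - 1 = e + 2 := by omega
    rw [h3]
    have h4 := Nat.choose_symm (by omega : 2 ≤ e + 2)
    have h5 : e + 2 - 2 = e := by omega
    rw [h5] at h4
    exact h4
  rw [h2] at h1
  exact h1


lemma isPolyFun_eval_fst {n : ℕ} (q : MvPolynomial (Fin 3) ℂ) :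
    IsPolyFun (fun p : (Fin 3 → ℂ) × (Fin (n + 1) → ℂ) => eval p.1 q) := by
  induction q using MvPolynomial.induction_on with
  | C a =>
      have h1 : (fun p : (Fin 3 → ℂ) × (Fin (n + 1) → ℂ) => eval p.1 (C a))
          = algebraMap ℂ (((Fin 3 → ℂ) × (Fin (n + 1) → ℂ)) → ℂ) a := by
        funext p
        simp
      rw [IsPolyFun, h1]
      exact Subalgebra.algebraMap_mem _ a
  | add q1 q2 h1 h2 =>
      have h3 : (fun p : (Fin 3 → ℂ) × (Fin (n + 1) → ℂ) => eval p.1 (q1 + q2))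
          = (fun p : (Fin 3 → ℂ) × (Fin (n + 1) → ℂ) => eval p.1 q1)
            + (fun p : (Fin 3 → ℂ) × (Fin (n + 1) → ℂ) => eval p.1 q2) := by
        funext p
        simp
      rw [IsPolyFun, h3]
      exact add_mem h1 h2
  | mul_X q i h1 =>
      have h3 : (fun p : (Fin 3 → ℂ) × (Fin (n + 1) → ℂ) => eval p.1 (q * X i))
          = (fun p : (Fin 3 → ℂ) × (Fin (n + 1) → ℂ) => eval p.1 q)
            * (fun p : (Fin 3 → ℂ) × (Fin (n + 1) → ℂ) => p.1 i) := by
        funext p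
        simp
      rw [IsPolyFun, h3]
      refine mul_mem h1 (Algebra.subset_adjoin ?_)
      exact ⟨fun a b => rfl, fun c a => rfl⟩

lemma isPolyFun_pair {n : ℕ} (i j : Fin (n + 1)) (w : Fin (n + 1) → ℂ) :
    IsPolyFun (fun p : (Fin 3 → ℂ) × (Fin (n + 1) → ℂ) => p.2 i * w j - p.2 j * w i) := by
  have h1 : (fun p : (Fin 3 → ℂ) × (Fin (n + 1) → ℂ) => p.2 i * w j - p.2 j * w i)
      = (fun p : (Fin 3 → ℂ) × (Fin (n + 1) → ℂ) => p.2 i)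
          * algebraMap ℂ (((Fin 3 → ℂ) × (Fin (n + 1) → ℂ)) → ℂ) (w j)
        - (fun p : (Fin 3 → ℂ) × (Fin (n + 1) → ℂ) => p.2 j)
          * algebraMap ℂ (((Fin 3 → ℂ) × (Fin (n + 1) → ℂ)) → ℂ) (w i) := rfl
  rw [IsPolyFun, h1]
  exact sub_mem
    (mul_mem (Algebra.subset_adjoin ⟨fun a b => rfl, fun c a => rfl⟩)
      (Subalgebra.algebraMap_mem _ _))
    (mul_mem (Algebra.subset_adjoin ⟨fun a b => rfl, fun c a => rfl⟩)
      (Subalgebra.algebraMap_mem _ _))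

end UHPAux

/-- For `binom (e+2) 2 = n + 1`, the pullback of the universal degree-`m` hypersurface in
`ℙⁿ` to `ℙ²` along the degree-`e` Veronese followed by a (general) linear inclusion has a
section over every plane curve of degree at most `e`.  (The statement holds for every
injective linear inclusion, which formalizes "a general linear inclusion".) -/
theorem universal_hypersurface_pullback_has_sections_over_low_degree_curves
    (e n m : ℕ) (he : 0 < e) (hn : 0 < n) (hm : 0 < m)
    (hbinom : (e + 2).choose 2 = n + 1)
    (ℓ : Module.Dual ℂ (HPoly3 e) →ₗ[ℂ] HPolyN n m) (hℓ : Function.Injective ℓ)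
    (k : ℕ) (hk : 1 ≤ k) (hke : k ≤ e) (g : HPoly3 k) (hg : g ≠ 0) :
    SectionOverCurve e n m ℓ (PlaneCurve g) := by
  classical
  have hgpoly : (g : MvPolynomial (Fin 3) ℂ).IsHomogeneous k :=
    (mem_homogeneousSubmodule _ _).mp g.2
  have hgne : (g : MvPolynomial (Fin 3) ℂ) ≠ 0 := fun h => hg (ZeroMemClass.coe_eq_zero.mp h)
  set p0 : MvPolynomial (Fin 3) ℂ := (g : MvPolynomial (Fin 3) ℂ) * (X 0) ^ (e - k) with hp0def
  have hp0hom : p0.IsHomogeneous e := by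
    have h1 := hgpoly.mul (isHomogeneous_X_pow (R := ℂ) (0 : Fin 3) (e - k))
    have h2 : k + (e - k) = e := by omega
    rwa [h2] at h1
  have hp0ne : p0 ≠ 0 := mul_ne_zero hgne (pow_ne_zero _ (X_ne_zero _))
  set P0 : HPoly3 e := ⟨p0, (mem_homogeneousSubmodule _ _).mpr hp0hom⟩ with hP0def
  set Φ : Module.Dual ℂ (HPoly3 e) →ₗ[ℂ] ℂ := Module.Dual.eval ℂ (HPoly3 e) P0 with hΦdef
  have hΦapp : ∀ φ : Module.Dual ℂ (HPoly3 e), Φ φ = φ P0 := fun φ => rfl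
  have hΦne : Φ ≠ 0 := by
    have hP0ne' : P0 ≠ 0 := fun h => hp0ne (by
      have h2 := congrArg (fun Q : HPoly3 e => (Q : MvPolynomial (Fin 3) ℂ)) h
      simpa [hP0def] using h2)
    obtain ⟨φ, hφ⟩ : ∃ φ : Module.Dual ℂ (HPoly3 e), φ P0 ≠ 0 := by
      by_contra hφ
      push_neg at hφ
      exact hP0ne' ((Module.forall_dual_apply_eq_zero_iff ℂ P0).mp hφ)
    intro h0
    apply hφ
    rw [← hΦapp φ, h0]
    rfl
  have hfr : finrank ℂ (Module.Dual ℂ (HPoly3 e)) ≤ n + 1 := by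
    rw [Subspace.dual_finrank_eq]
    calc finrank ℂ (HPoly3 e) ≤ (e + 2).choose 2 := UHPAux.finrank_HPoly3_le e
      _ = n + 1 := hbinom
  have hrange : finrank ℂ (LinearMap.range Φ) = 1 := by
    rcases eq_bot_or_eq_top (LinearMap.range Φ) with h | h
    · exact absurd (LinearMap.range_eq_bot.mp h) hΦne
    · rw [h, finrank_top, finrank_self]
  have hker_le : finrank ℂ (LinearMap.ker Φ) ≤ n := by
    have h1 := LinearMap.finrank_range_add_finrank_ker Φ
    omega
  set K := LinearMap.ker Φ with hKdef
  set b := Module.finBasis ℂ K with hbdef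
  set FF : Fin (finrank ℂ K) → MvPolynomial (Fin (n + 1)) ℂ :=
    fun i => ((ℓ (b i) : HPolyN n m) : MvPolynomial (Fin (n + 1)) ℂ) with hFFdef
  have hFFhom : ∀ i, (FF i).IsHomogeneous m :=
    fun i => (mem_homogeneousSubmodule _ _).mp (ℓ (b i)).2
  obtain ⟨w, hw0, hweval⟩ := UHPAux.exists_common_root hn hm
    (by rw [Fintype.card_fin]; exact hker_le) FF hFFhom
  set x0 : Pn n := Projectivization.mk ℂ w hw0 with hx0def
  have haeval : ∀ (N' : ℕ) (w' : Fin N' → ℂ) (p : MvPolynomial (Fin N') ℂ),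
      aeval w' p = eval w' p := by
    intro N' w' p
    rw [aeval_def, Algebra.algebraMap_self]
    rfl
  have hbase : ∀ φ ∈ K, eval w ((ℓ φ : HPolyN n m) : MvPolynomial (Fin (n + 1)) ℂ) = 0 := by
    intro φ hφ
    set Ew : HPolyN n m →ₗ[ℂ] ℂ :=
      (aeval w : MvPolynomial (Fin (n + 1)) ℂ →ₐ[ℂ] ℂ).toLinearMap.comp
        (homogeneousSubmodule (Fin (n + 1)) ℂ m).subtype with hEwdef
    set L : K →ₗ[ℂ] ℂ := Ew.comp (ℓ.comp K.subtype) with hLdef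
    have hL0 : L = 0 := by
      apply b.ext
      intro i
      rw [LinearMap.zero_apply]
      show aeval w ((ℓ (b i) : HPolyN n m) : MvPolynomial (Fin (n + 1)) ℂ) = 0
      rw [haeval]
      exact hweval i
    have h2 : L ⟨φ, hφ⟩ = 0 := by rw [hL0]; rfl
    have h3 : aeval w ((ℓ φ : HPolyN n m) : MvPolynomial (Fin (n + 1)) ℂ) = 0 := h2
    rwa [haeval] at h3
  have hx0reps : ∀ w' ∈ reps x0, ∃ t : ℂ, t ≠ 0 ∧ w' = t • w := by
    intro w' hw'
    obtain ⟨hne, hmk⟩ := hw'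
    obtain ⟨a, ha⟩ := (Projectivization.mk_eq_mk_iff ℂ w' w hne hw0).mp hmk
    exact ⟨(a : ℂ), Units.ne_zero a, by rw [← ha, Units.smul_def]⟩
  have hfam : ∀ v : Fin 3 → ℂ, eval v (g : MvPolynomial (Fin 3) ℂ) = 0 →
      ∀ w' ∈ reps x0, eval w' ((ℓ (veroneseEval e v) : HPolyN n m)
        : MvPolynomial (Fin (n + 1)) ℂ) = 0 := by
    intro v hv w' hw'
    obtain ⟨t, ht, rfl⟩ := hx0reps w' hw'
    have hker : veroneseEval e v ∈ K := by
      rw [hKdef, LinearMap.mem_ker]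
      have h4 : Φ (veroneseEval e v) = aeval v p0 := rfl
      rw [h4, haeval, hp0def, map_mul, map_pow, eval_X, hv, zero_mul]
    have hhom : ((ℓ (veroneseEval e v) : HPolyN n m)
        : MvPolynomial (Fin (n + 1)) ℂ).IsHomogeneous m :=
      (mem_homogeneousSubmodule _ _).mp (ℓ (veroneseEval e v)).2
    rw [UHPAux.eval_smul_of_isHomogeneous hhom t w, hbase _ hker, mul_zero]
  set S : Set (P2 × Pn n) := {ux | ux.1 ∈ PlaneCurve g ∧ ux.2 = x0} with hSdef
  refine ⟨S, ?_, ?_, ?_⟩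
  · refine ⟨insert
      (fun p : (Fin 3 → ℂ) × (Fin (n + 1) → ℂ) => eval p.1 (g : MvPolynomial (Fin 3) ℂ))
      {h | ∃ i j, h = fun p : (Fin 3 → ℂ) × (Fin (n + 1) → ℂ) => p.2 i * w j - p.2 j * w i},
      ?_, ?_⟩
    · rintro f hf
      rcases Set.mem_insert_iff.mp hf with rfl | hf2
      · exact UHPAux.isPolyFun_eval_fst _
      · obtain ⟨i, j, rfl⟩ := hf2
        exact UHPAux.isPolyFun_pair i j w
    · ext ux
      obtain ⟨u, x⟩ := ux
      simp only [Set.mem_setOf_eq]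
      constructor
      · rintro ⟨hu, rfl⟩ f hf v hv w' hw'
        rcases Set.mem_insert_iff.mp hf with rfl | hf2
        · exact hu v hv
        · obtain ⟨i, j, rfl⟩ := hf2
          obtain ⟨t, ht, rfl⟩ := hx0reps w' hw'
          have h5 : (t • w) i * w j - (t • w) j * w i = 0 := by
            simp only [Pi.smul_apply, smul_eq_mul]
            ring
          exact h5
      · intro H
        constructor
        · intro v hv
          exact H _ (Set.mem_insert _ _) v hv x.rep ⟨x.rep_nonzero, x.mk_rep⟩
        · obtain ⟨j0, hj0⟩ : ∃ j0, w j0 ≠ 0 := by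
            by_contra hc
            push_neg at hc
            exact hw0 (funext hc)
          have hpts : ∀ i j, x.rep i * w j = x.rep j * w i := by
            intro i j
            have h5 := H _ (Set.mem_insert_of_mem _ ⟨i, j, rfl⟩) u.rep
              ⟨u.rep_nonzero, u.mk_rep⟩ x.rep ⟨x.rep_nonzero, x.mk_rep⟩
            exact sub_eq_zero.mp h5
          set t := x.rep j0 / w j0 with htdef
          have hwt : x.rep = t • w := by
            funext i
            rw [Pi.smul_apply, smul_eq_mul, htdef, div_mul_eq_mul_div, eq_div_iff hj0]
            exact hpts i j0
          have ht : t ≠ 0 := by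
            intro h0
            apply x.rep_nonzero
            rw [hwt, h0, zero_smul]
          rw [← x.mk_rep, hx0def]
          exact (Projectivization.mk_eq_mk_iff ℂ _ _ x.rep_nonzero hw0).mpr
            ⟨Units.mk0 t ht, by rw [Units.smul_def, Units.val_mk0]; exact hwt.symm⟩
  · rintro ⟨u, x⟩ ⟨hu, rfl⟩
    exact ⟨hu, fun v hv w' hw' => hfam v (hu v hv) w' hw'⟩
  · intro u hu
    exact ⟨x0, ⟨hu, rfl⟩, fun y hy => hy.2⟩
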